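/- Let n ≥ 1, ℓ ∈ {1,…,n}, and let R ∈ ℂ^{n×n} be an upper triangular identity-plus-spike matrix with spike in column ℓ: R_{ij} = δ_{ij} for every j ≠ ℓ, and R_{iℓ} = 0 for i > ℓ (the entries R_{iℓ} for i ≤ ℓ are arbitrary). Define the embedding R̲ ∈ ℂ^{(n+1)×(n+1)} whose leading principal n×n submatrix is R, whose (ℓ, n+1) entry is 1, and whose remaining entries (in particular all of row n+1) are zero. Then there exist core transformations C_1, …, C_n and B_1, …, B_n in ℂ^{(n+1)×(n+1)}, with C_j and B_j having active part at position j, and a vector y ∈ ℂ^{n+1} such that R̲ = (C_1 C_2 ⋯ C_n)^* ( B_1 B_2 ⋯ B_n + e_1 y^T ). -/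

import Mathlib

open Matrix

noncomputable section

/-- A core transformation with active part at position `j` (0-based; rows/columns
`j` and `j+1` of an `(n+1) × (n+1)` matrix): a unitary matrix equal to the identity
outside the 2×2 principal submatrix in rows and columns `j, j+1`. -/
def IsCore {n : ℕ} (j : Fin n) (U : Matrix (Fin (n + 1)) (Fin (n + 1)) ℂ) : Prop :=
  U ∈ Matrix.unitaryGroup (Fin (n + 1)) ℂ ∧
  ∀ p q : Fin (n + 1),
    ¬((p = j.castSucc ∨ p = j.succ) ∧ (q = j.castSucc ∨ q = j.succ)) →
      U p q = if p = q then 1 else 0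

/-- Ordered product `A 0 * A 1 * ⋯ * A (k-1)` of a finite sequence of matrices. -/
def seqProd {m k : ℕ} (A : Fin k → Matrix (Fin m) (Fin m) ℂ) : Matrix (Fin m) (Fin m) ℂ :=
  ((List.finRange k).map A).prod

namespace SpikeAux


variable {n : ℕ}

/-- embed a 2×2 matrix as a core transformation at position `j`. -/
def coreM (j : Fin n) (g : Matrix (Fin 2) (Fin 2) ℂ) : Matrix (Fin (n+1)) (Fin (n+1)) ℂ :=
  Matrix.of fun p q =>
    if p.val = j.val ∧ q.val = j.val then g 0 0
    else if p.val = j.val ∧ q.val = j.val + 1 then g 0 1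
    else if p.val = j.val + 1 ∧ q.val = j.val then g 1 0
    else if p.val = j.val + 1 ∧ q.val = j.val + 1 then g 1 1
    else if p = q then 1 else 0

lemma coreM_apply (j : Fin n) (g : Matrix (Fin 2) (Fin 2) ℂ) (p q : Fin (n+1)) :
    coreM j g p q =
      if p.val = j.val then
        g 0 0 * (if q = j.castSucc then 1 else 0) + g 0 1 * (if q = j.succ then 1 else 0)
      else if p.val = j.val + 1 then
        g 1 0 * (if q = j.castSucc then 1 else 0) + g 1 1 * (if q = j.succ then 1 else 0)
      else if p = q then 1 else 0 := by
  simp only [coreM, of_apply, Fin.ext_iff, Fin.coe_castSucc, Fin.val_succ]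
  split_ifs <;> first | ring1 | omega

lemma coreM_mul_apply (j : Fin n) (g : Matrix (Fin 2) (Fin 2) ℂ)
    (A : Matrix (Fin (n+1)) (Fin (n+1)) ℂ) (p q : Fin (n+1)) :
    (coreM j g * A) p q =
      if p.val = j.val then g 0 0 * A j.castSucc q + g 0 1 * A j.succ q
      else if p.val = j.val + 1 then g 1 0 * A j.castSucc q + g 1 1 * A j.succ q
      else A p q := by
  rw [mul_apply]
  simp only [coreM_apply]
  split_ifs with h1 h2
  · simp only [add_mul, mul_ite, mul_one, mul_zero, ite_mul, zero_mul,
      Finset.sum_add_distrib, Finset.sum_ite_eq', Finset.mem_univ, if_pos]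
  · simp only [add_mul, mul_ite, mul_one, mul_zero, ite_mul, zero_mul,
      Finset.sum_add_distrib, Finset.sum_ite_eq', Finset.mem_univ, if_pos]
  · simp only [ite_mul, one_mul, zero_mul, Finset.sum_ite_eq, Finset.mem_univ, if_pos]

lemma coreM_mulVec (j : Fin n) (g : Matrix (Fin 2) (Fin 2) ℂ)
    (v : Fin (n+1) → ℂ) (p : Fin (n+1)) :
    (coreM j g *ᵥ v) p =
      if p.val = j.val then g 0 0 * v j.castSucc + g 0 1 * v j.succ
      else if p.val = j.val + 1 then g 1 0 * v j.castSucc + g 1 1 * v j.succ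
      else v p := by
  simp only [mulVec, dotProduct]
  simp only [coreM_apply]
  split_ifs with h1 h2
  · simp only [add_mul, mul_ite, mul_one, mul_zero, ite_mul, zero_mul,
      Finset.sum_add_distrib, Finset.sum_ite_eq', Finset.mem_univ, if_pos]
  · simp only [add_mul, mul_ite, mul_one, mul_zero, ite_mul, zero_mul,
      Finset.sum_add_distrib, Finset.sum_ite_eq', Finset.mem_univ, if_pos]
  · simp only [ite_mul, one_mul, zero_mul, Finset.sum_ite_eq, Finset.mem_univ, if_pos]

lemma coreM_mul_coreM (j : Fin n) (g h : Matrix (Fin 2) (Fin 2) ℂ) :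
    coreM j g * coreM j h = coreM j (g * h) := by
  ext p q
  rw [coreM_mul_apply]
  simp only [coreM_apply, mul_apply, Fin.sum_univ_two, Fin.coe_castSucc, Fin.val_succ]
  split_ifs <;> first | ring1 | omega

lemma coreM_one (j : Fin n) : coreM j (1 : Matrix (Fin 2) (Fin 2) ℂ) = 1 := by
  ext p q
  simp only [coreM, of_apply, one_apply, Fin.ext_iff]
  split_ifs <;> first | rfl | omega

lemma coreM_conjTranspose (j : Fin n) (g : Matrix (Fin 2) (Fin 2) ℂ) :
    (coreM j g)ᴴ = coreM j gᴴ := by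
  ext p q
  simp only [conjTranspose_apply, coreM, of_apply, Fin.ext_iff]
  split_ifs <;> first | rfl | omega | simp

lemma coreM_mem (j : Fin n) (g : Matrix (Fin 2) (Fin 2) ℂ) (hg : g * star g = 1) :
    coreM j g ∈ Matrix.unitaryGroup (Fin (n+1)) ℂ := by
  rw [Matrix.mem_unitaryGroup_iff, Matrix.star_eq_conjTranspose, coreM_conjTranspose,
    coreM_mul_coreM, show g * gᴴ = 1 from hg, coreM_one]

lemma isCore_coreM (j : Fin n) (g : Matrix (Fin 2) (Fin 2) ℂ) (hg : g * star g = 1) :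
    IsCore j (coreM j g) := by
  refine ⟨coreM_mem j g hg, ?_⟩
  intro p q hpq
  have h1 : ¬(p.val = j.val ∨ p.val = j.val + 1) ∨ ¬(q.val = j.val ∨ q.val = j.val + 1) := by
    by_contra h
    push_neg at h
    apply hpq
    constructor
    · rcases h.1 with h' | h'
      · exact Or.inl (Fin.ext (by simpa using h'))
      · exact Or.inr (Fin.ext (by simpa using h'))
    · rcases h.2 with h' | h'
      · exact Or.inl (Fin.ext (by simpa using h'))
      · exact Or.inr (Fin.ext (by simpa using h'))
  simp only [coreM, of_apply]
  split_ifs with a b c d e <;> first | rfl | omega |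
    (exfalso; rcases h1 with h1 | h1 <;> [exact h1 (by omega); exact h1 (by omega)])

lemma mul_vecMulVec {m : ℕ} (A : Matrix (Fin m) (Fin m) ℂ) (u v : Fin m → ℂ) :
    A * Matrix.vecMulVec u v = Matrix.vecMulVec (A *ᵥ u) v := by
  ext p q
  simp [Matrix.mul_apply, Matrix.vecMulVec_apply, Matrix.mulVec, dotProduct,
    Finset.sum_mul, mul_assoc]


variable {n : ℕ} (ℓ : Fin n) (R : Matrix (Fin n) (Fin n) ℂ)

/-- partial squared norms of the spike -/
def tt (k : ℕ) : ℝ :=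
  Real.sqrt (1 + ∑ i : Fin n, if k ≤ i.val ∧ i.val ≤ ℓ.val then Complex.normSq (R i ℓ) else 0)

lemma tt_arg_nonneg (k : ℕ) :
    0 ≤ 1 + ∑ i : Fin n, if k ≤ i.val ∧ i.val ≤ ℓ.val then Complex.normSq (R i ℓ) else 0 := by
  have : 0 ≤ ∑ i : Fin n, if k ≤ i.val ∧ i.val ≤ ℓ.val then Complex.normSq (R i ℓ) else 0 :=
    Finset.sum_nonneg fun i _ => by split_ifs <;> [exact Complex.normSq_nonneg _; exact le_rfl]
  linarith

lemma tt_pos (k : ℕ) : 0 < tt ℓ R k := by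
  have : 0 ≤ ∑ i : Fin n, if k ≤ i.val ∧ i.val ≤ ℓ.val then Complex.normSq (R i ℓ) else 0 :=
    Finset.sum_nonneg fun i _ => by split_ifs <;> [exact Complex.normSq_nonneg _; exact le_rfl]
  exact Real.sqrt_pos.mpr (by linarith)

lemma tt_sq (k : ℕ) :
    (tt ℓ R k) ^ 2 = 1 + ∑ i : Fin n, if k ≤ i.val ∧ i.val ≤ ℓ.val then Complex.normSq (R i ℓ) else 0 :=
  Real.sq_sqrt (tt_arg_nonneg ℓ R k)

lemma tt_top : tt ℓ R (ℓ.val + 1) = 1 := by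
  have h : ∀ i : Fin n, (if ℓ.val + 1 ≤ i.val ∧ i.val ≤ ℓ.val then Complex.normSq (R i ℓ) else 0) = 0 := by
    intro i; rw [if_neg]; omega
  simp only [tt, Finset.sum_congr rfl (fun i _ => h i), Finset.sum_const_zero, add_zero,
    Real.sqrt_one]

lemma tt_rec (k : ℕ) (hk : k ≤ ℓ.val) :
    (tt ℓ R k) ^ 2 = Complex.normSq (R ⟨k, lt_of_le_of_lt hk ℓ.isLt⟩ ℓ) + (tt ℓ R (k+1)) ^ 2 := by
  rw [tt_sq, tt_sq]
  have h : ∀ i : Fin n,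
      (if k ≤ i.val ∧ i.val ≤ ℓ.val then Complex.normSq (R i ℓ) else 0) =
      (if i = ⟨k, lt_of_le_of_lt hk ℓ.isLt⟩ then Complex.normSq (R i ℓ) else 0) +
      (if k + 1 ≤ i.val ∧ i.val ≤ ℓ.val then Complex.normSq (R i ℓ) else 0) := by
    intro i
    by_cases hik : i = ⟨k, lt_of_le_of_lt hk ℓ.isLt⟩
    · subst hik
      rw [if_pos ⟨le_refl _, hk⟩, if_pos rfl, if_neg (by simp)]
      simp
    · have : i.val ≠ k := fun h' => hik (Fin.ext h')
      rw [if_neg hik]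
      split_ifs <;> first | ring1 | omega
  rw [Finset.sum_congr rfl (fun i _ => h i), Finset.sum_add_distrib,
    Finset.sum_ite_eq' Finset.univ, if_pos (Finset.mem_univ _)]
  ring

/-- the rolling 2×2 cores -/
def ggC (k : Fin n) : Matrix (Fin 2) (Fin 2) ℂ :=
  ((tt ℓ R k.val : ℝ) : ℂ)⁻¹ •
    !![-(starRingEnd ℂ (R k ℓ)), ((tt ℓ R (k.val+1) : ℝ) : ℂ);
       ((tt ℓ R (k.val+1) : ℝ) : ℂ), R k ℓ]

def swapC : Matrix (Fin 2) (Fin 2) ℂ := !![0, 1; 1, 0]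

lemma swapC_unitary : swapC * star swapC = 1 := by
  rw [Matrix.star_eq_conjTranspose]
  ext p q
  fin_cases p <;> fin_cases q <;>
    simp [swapC, Matrix.mul_apply, Fin.sum_univ_two, Matrix.one_apply]

lemma ggC_key (k : Fin n) (hk : k.val ≤ ℓ.val) :
    ((tt ℓ R k.val : ℝ) : ℂ) ^ 2 =
      (Complex.normSq (R k ℓ) : ℂ) + ((tt ℓ R (k.val+1) : ℝ) : ℂ) ^ 2 := by
  have := tt_rec ℓ R k.val hk
  have hke : (⟨k.val, lt_of_le_of_lt hk ℓ.isLt⟩ : Fin n) = k := Fin.ext rfl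
  rw [hke] at this
  exact_mod_cast this

lemma ggC_ne (k : Fin n) : ((tt ℓ R k.val : ℝ) : ℂ) ≠ 0 := by
  simp only [ne_eq, Complex.ofReal_eq_zero]
  exact ne_of_gt (tt_pos ℓ R k.val)

lemma two_unitary (r t0 t1 : ℂ) (h0 : starRingEnd ℂ t0 = t0) (h1 : starRingEnd ℂ t1 = t1)
    (hne : t0 ≠ 0) (hkey : t0 ^ 2 = starRingEnd ℂ r * r + t1 ^ 2) :
    (t0⁻¹ • !![-(starRingEnd ℂ r), t1; t1, r]) *
      star (t0⁻¹ • !![-(starRingEnd ℂ r), t1; t1, r]) = 1 := by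
  have h0' : star t0⁻¹ = t0⁻¹ := by rw [Complex.star_def, map_inv₀, h0]
  have hMH : (!![-(starRingEnd ℂ r), t1; t1, r])ᴴ = !![-r, t1; t1, starRingEnd ℂ r] := by
    ext i j
    fin_cases i <;> fin_cases j <;> simp [h1]
  rw [Matrix.star_eq_conjTranspose, Matrix.conjTranspose_smul, hMH, smul_mul_smul_comm,
    Matrix.mul_fin_two, h0']
  have e1 : -(starRingEnd ℂ r) * -r + t1 * t1 = t0 ^ 2 := by linear_combination -hkey
  have e2 : -(starRingEnd ℂ r) * t1 + t1 * starRingEnd ℂ r = 0 := by ring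
  have e3 : t1 * -r + r * t1 = 0 := by ring
  have e4 : t1 * t1 + r * starRingEnd ℂ r = t0 ^ 2 := by linear_combination -hkey
  rw [e1, e2, e3, e4, Matrix.one_fin_two]
  have e5 : t0⁻¹ * t0⁻¹ * t0 ^ 2 = 1 := by field_simp
  ext i j
  fin_cases i <;> fin_cases j <;> simp [Matrix.smul_apply, e5]

lemma ggC_unitary (k : Fin n) (hk : k.val ≤ ℓ.val) : ggC ℓ R k * star (ggC ℓ R k) = 1 := by
  have hne := ggC_ne ℓ R k
  have hkey := ggC_key ℓ R k hk
  refine two_unitary _ _ _ (Complex.conj_ofReal _) (Complex.conj_ofReal _) hne ?_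
  rw [hkey, Complex.normSq_eq_conj_mul_self]

lemma mul_star_unitary (g s : Matrix (Fin 2) (Fin 2) ℂ) (hg : g * star g = 1)
    (hs : s * star s = 1) : (g * s) * star (g * s) = 1 := by
  rw [Matrix.star_mul, mul_assoc, ← mul_assoc s, hs, one_mul, hg]



def CC (j : Fin n) : Matrix (Fin (n+1)) (Fin (n+1)) ℂ :=
  if j.val ≤ ℓ.val then coreM j (ggC ℓ R j) else coreM j swapC

def BB (j : Fin n) : Matrix (Fin (n+1)) (Fin (n+1)) ℂ :=
  if j.val < ℓ.val then coreM j (ggC ℓ R j)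
  else if j.val = ℓ.val then coreM j (ggC ℓ R j * swapC) else coreM j swapC

/-- spike entries as a total function of the row index -/
def rr (pv : ℕ) : ℂ := if h : pv < n then R ⟨pv, h⟩ ℓ else 0

def dv (k : ℕ) : Fin (n+1) → ℂ := fun p =>
  if p.val = k then -((tt ℓ R k : ℝ) : ℂ)
  else if p.val < k then rr ℓ R p.val else 0

def fm (m : ℕ) (p : Fin (n+1)) : Fin (n+1) :=
  if p.val < m then p
  else if p.val = m then ⟨n, Nat.lt_succ_self n⟩
  else ⟨p.val - 1, lt_of_le_of_lt (Nat.sub_le _ _) p.isLt⟩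

lemma ggC_apply (k : Fin n) :
    ggC ℓ R k 0 0 = (((tt ℓ R k.val : ℝ) : ℂ))⁻¹ * -(starRingEnd ℂ (R k ℓ)) ∧
    ggC ℓ R k 0 1 = (((tt ℓ R k.val : ℝ) : ℂ))⁻¹ * ((tt ℓ R (k.val+1) : ℝ) : ℂ) ∧
    ggC ℓ R k 1 0 = (((tt ℓ R k.val : ℝ) : ℂ))⁻¹ * ((tt ℓ R (k.val+1) : ℝ) : ℂ) ∧
    ggC ℓ R k 1 1 = (((tt ℓ R k.val : ℝ) : ℂ))⁻¹ * (R k ℓ) := by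
  refine ⟨?_, ?_, ?_, ?_⟩ <;> simp [ggC]

lemma swapC_apply :
    swapC 0 0 = 0 ∧ swapC 0 1 = 1 ∧ swapC 1 0 = 1 ∧ swapC 1 1 = 0 := by
  refine ⟨?_, ?_, ?_, ?_⟩ <;> simp [swapC]

/-- the rolling step -/
lemma step (k : ℕ) (hk : k ≤ ℓ.val) :
    CC ℓ R ⟨k, lt_of_le_of_lt hk ℓ.isLt⟩ *ᵥ dv ℓ R (k+1) = dv ℓ R k := by
  have hkn : k < n := lt_of_le_of_lt hk ℓ.isLt
  set j : Fin n := ⟨k, hkn⟩ with hj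
  have hCj : CC ℓ R j = coreM j (ggC ℓ R j) := by rw [CC, if_pos hk]
  have hne : ((tt ℓ R k : ℝ) : ℂ) ≠ 0 := ggC_ne ℓ R j
  have hkey : ((tt ℓ R k : ℝ) : ℂ) ^ 2 =
      ((Complex.normSq (R j ℓ) : ℝ) : ℂ) + ((tt ℓ R (k+1) : ℝ) : ℂ) ^ 2 := ggC_key ℓ R j hk
  have hconj : starRingEnd ℂ (R j ℓ) * R j ℓ = ((Complex.normSq (R j ℓ) : ℝ) : ℂ) := by
    rw [mul_comm]; exact Complex.mul_conj _
  obtain ⟨g00, g01, g10, g11⟩ := ggC_apply ℓ R j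
  funext p
  rw [hCj, coreM_mulVec, g00, g01, g10, g11]
  simp only [show (j : ℕ) = k from rfl]
  have hjc : (j.castSucc : Fin (n+1)).val = k := rfl
  have hjs : (j.succ : Fin (n+1)).val = k + 1 := rfl
  have hvc : dv ℓ R (k+1) j.castSucc = R j ℓ := by
    rw [dv]; rw [if_neg (by omega), if_pos (by omega), show rr ℓ R (j.castSucc : Fin (n+1)).val
      = R j ℓ from by rw [rr, dif_pos (by omega : (j.castSucc : Fin (n+1)).val < n)]; rfl]
  have hvs : dv ℓ R (k+1) j.succ = -((tt ℓ R (k+1) : ℝ) : ℂ) := by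
    rw [dv, if_pos hjs]
  by_cases hp : p.val = k
  · rw [if_pos hp, hvc, hvs]
    have hdk : dv ℓ R k p = -((tt ℓ R k : ℝ) : ℂ) := by rw [dv, if_pos hp]
    rw [hdk]
    field_simp
    linear_combination hkey - hconj
  · rw [if_neg hp]
    by_cases hp2 : p.val = k + 1
    · rw [if_pos hp2, hvc, hvs]
      have hdk : dv ℓ R k p = 0 := by
        rw [dv, if_neg (by omega), if_neg (by omega)]
      rw [hdk]
      ring
    · rw [if_neg hp2]
      rw [dv, dv, if_neg (show ¬((p : ℕ) = k+1) from hp2), if_neg (show ¬((p : ℕ) = k) from hp)]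
      split_ifs with h1 h2 <;> first | rfl | omega

/-- take-products roll up the spike vector -/
lemma takeProd (k : ℕ) (hk : k ≤ ℓ.val + 1) :
    (((List.finRange n).take k).map (CC ℓ R)).prod *ᵥ dv ℓ R k = dv ℓ R 0 := by
  induction k with
  | zero => simp
  | succ k ih =>
    have hkn : k < n := by omega
    have hfr : (List.finRange n).take (k+1) =
        (List.finRange n).take k ++ [⟨k, hkn⟩] := by
      rw [List.take_succ]
      congr 1
      rw [List.getElem?_eq_getElem (by simpa using hkn)]
      simp
    rw [hfr, List.map_append, List.prod_append, List.map_singleton, List.prod_singleton,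
      ← Matrix.mulVec_mulVec, step ℓ R k (by omega), ih (by omega)]

/-- the product of the trailing swaps is an explicit "almost cyclic" permutation -/
lemma dropProd (k m : ℕ) (hm1 : ℓ.val + 1 ≤ m) (hmk : m + k = n) :
    (((List.finRange n).drop m).map (CC ℓ R)).prod =
      Matrix.of (fun p q => if q = fm m p then (1:ℂ) else 0) := by
  induction k generalizing m with
  | zero =>
    have hmn : m = n := by omega
    rw [show m = n from hmn]
    have hd : (List.finRange n).drop n = [] := by simp
    rw [hd, List.map_nil, List.prod_nil]
    ext p q
    have hfm : fm n p = p := by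
      rw [fm]
      split_ifs with h1 h2
      · rfl
      · exact (Fin.ext h2.symm)
      · exfalso; omega
    rw [Matrix.of_apply, hfm, Matrix.one_apply]
    simp [eq_comm]
  | succ k ih =>
    have hmn : m < n := by omega
    rw [List.drop_eq_getElem_cons (by simpa using hmn), List.map_cons, List.prod_cons]
    have hget : (List.finRange n)[m]'(by simpa using hmn) = ⟨m, hmn⟩ := by simp
    rw [hget, ih (m+1) (by omega) (by omega)]
    have hC : CC ℓ R ⟨m, hmn⟩ = coreM ⟨m, hmn⟩ swapC := by
      rw [CC, if_neg (show ¬ (m ≤ ℓ.val) by omega)]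
    rw [hC]
    obtain ⟨s00, s01, s10, s11⟩ := swapC_apply
    ext p q
    rw [coreM_mul_apply, s00, s01, s10, s11]
    have hjc : ((⟨m, hmn⟩ : Fin n).castSucc : Fin (n+1)).val = m := rfl
    have hjs : ((⟨m, hmn⟩ : Fin n).succ : Fin (n+1)).val = m + 1 := rfl
    simp only [Matrix.of_apply]
    by_cases hp : p.val = m
    · rw [if_pos hp]
      have h1 : fm (m+1) ((⟨m, hmn⟩ : Fin n).castSucc) = (⟨m, hmn⟩ : Fin n).castSucc := by
        rw [fm, if_pos (by omega)]
      have h2 : fm (m+1) ((⟨m, hmn⟩ : Fin n).succ) = ⟨n, Nat.lt_succ_self n⟩ := by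
        rw [fm, if_neg (by omega), if_pos (by omega)]
      have h3 : fm m p = ⟨n, Nat.lt_succ_self n⟩ := by
        rw [fm, if_neg (by omega), if_pos (by omega)]
      rw [h1, h2, h3]
      ring
    · rw [if_neg hp]
      by_cases hp2 : p.val = m + 1
      · rw [if_pos hp2]
        have h1 : fm (m+1) ((⟨m, hmn⟩ : Fin n).castSucc) = (⟨m, hmn⟩ : Fin n).castSucc := by
          rw [fm, if_pos (by omega)]
        have h2 : fm (m+1) ((⟨m, hmn⟩ : Fin n).succ) = ⟨n, Nat.lt_succ_self n⟩ := by
          rw [fm, if_neg (by omega), if_pos (by omega)]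
        have h3 : fm m p = ⟨p.val - 1, lt_of_le_of_lt (Nat.sub_le _ _) p.isLt⟩ := by
          rw [fm, if_neg (by omega), if_neg (by omega)]
        rw [h1, h2, h3]
        have h4 : (⟨p.val - 1, lt_of_le_of_lt (Nat.sub_le _ _) p.isLt⟩ : Fin (n+1)) =
            (⟨m, hmn⟩ : Fin n).castSucc := by
          apply Fin.ext; simp [hp2]
        rw [h4]
        ring
      · rw [if_neg hp2]
        have hsame : fm (m+1) p = fm m p := by
          rw [fm, fm]
          split_ifs with h1 h2 h3 h4 h5 h6 h7 <;> first | rfl | (exact Fin.ext rfl) | omega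
        rw [hsame]



def rbFun (pv qv : ℕ) : ℂ :=
  if qv = ℓ.val then (if pv ≤ ℓ.val then rr ℓ R pv else 0)
  else if qv = n then (if pv = ℓ.val then 1 else 0)
  else if pv = qv then 1 else 0

lemma rb_eq (hRid : ∀ i j : Fin n, j ≠ ℓ → R i j = if i = j then 1 else 0)
    (hRspike : ∀ i : Fin n, ℓ < i → R i ℓ = 0) :
    (Matrix.of (fun p q : Fin (n + 1) =>
        if hp : (p : ℕ) < n then
          if hq : (q : ℕ) < n then R ⟨p, hp⟩ ⟨q, hq⟩
          else if (p : ℕ) = (ℓ : ℕ) then 1 else 0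
        else 0)) =
      Matrix.of (fun p q => rbFun ℓ R p.val q.val) := by
  have hLn : ℓ.val < n := ℓ.isLt
  ext p q
  have hpb : p.val < n + 1 := p.isLt
  have hqb : q.val < n + 1 := q.isLt
  simp only [Matrix.of_apply, rbFun]
  by_cases hp : (p : ℕ) < n
  · rw [dif_pos hp]
    by_cases hq : (q : ℕ) < n
    · rw [dif_pos hq]
      by_cases hql : (q : ℕ) = ℓ.val
      · rw [if_pos hql]
        rw [show (⟨(q : ℕ), hq⟩ : Fin n) = ℓ from Fin.ext hql]
        by_cases hpl : (p : ℕ) ≤ ℓ.val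
        · rw [if_pos hpl, rr, dif_pos hp]
        · rw [if_neg hpl, hRspike ⟨(p : ℕ), hp⟩ (by rw [Fin.lt_def]; simp; omega)]
      · rw [if_neg hql, if_neg (by omega : ¬ (q : ℕ) = n)]
        rw [hRid ⟨(p : ℕ), hp⟩ ⟨(q : ℕ), hq⟩ (fun hcon => hql (congrArg Fin.val hcon))]
        simp only [Fin.mk.injEq]
    · have hqn : (q : ℕ) = n := by omega
      rw [dif_neg hq, if_neg (by omega : ¬ (q : ℕ) = ℓ.val), if_pos hqn]
  · rw [dif_neg hp]
    split_ifs <;> first | rfl | omega | (show (0:ℂ) = rr ℓ R p.val; simp only [rr]; rw [dif_neg hp])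

lemma fm_val (m : ℕ) (p : Fin (n+1)) :
    (fm m p).val = if p.val < m then p.val else if p.val = m then n else p.val - 1 := by
  rw [fm]; split_ifs <;> rfl

set_option maxHeartbeats 2000000 in
/-- the key commutation identity through the embedded spike matrix -/
lemma key1 (hRid : ∀ i j : Fin n, j ≠ ℓ → R i j = if i = j then 1 else 0)
    (hRspike : ∀ i : Fin n, ℓ < i → R i ℓ = 0) :
    (((List.finRange n).drop (ℓ.val+1)).map (CC ℓ R)).prod *
      (Matrix.of (fun p q : Fin (n + 1) =>
          if hp : (p : ℕ) < n then
            if hq : (q : ℕ) < n then R ⟨p, hp⟩ ⟨q, hq⟩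
            else if (p : ℕ) = (ℓ : ℕ) then 1 else 0
          else 0)) =
      coreM ℓ swapC * (((List.finRange n).drop (ℓ.val+1)).map (CC ℓ R)).prod +
      vecMulVec (dv ℓ R (ℓ.val+1)) (fun q : Fin (n+1) => if (q : ℕ) = ℓ.val then (1:ℂ) else 0) := by
  have hLn : ℓ.val < n := ℓ.isLt
  rw [rb_eq ℓ R hRid hRspike,
    dropProd ℓ R (n - (ℓ.val+1)) (ℓ.val+1) le_rfl (by omega)]
  ext p q
  have hpb : p.val < n + 1 := p.isLt
  have hqb : q.val < n + 1 := q.isLt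
  rw [Matrix.add_apply, coreM_mul_apply, Matrix.vecMulVec_apply, Matrix.mul_apply]
  obtain ⟨s00, s01, s10, s11⟩ := swapC_apply
  rw [s00, s01, s10, s11]
  simp only [Matrix.of_apply, ite_mul, one_mul, zero_mul, Finset.sum_ite_eq',
    Finset.mem_univ, if_pos]
  have htop : tt ℓ R (ℓ.val + 1) = 1 := tt_top ℓ R
  have e1 : ℓ.val < ℓ.val + 1 := Nat.lt_succ_self _
  have e2 : ¬(ℓ.val + 1 < ℓ.val + 1) := lt_irrefl _
  have e3 : ¬(ℓ.val = ℓ.val + 1) := by omega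
  simp only [dv, rbFun, htop, Fin.ext_iff, fm_val, Fin.coe_castSucc, Fin.val_succ,
    Complex.ofReal_one, e1, e2, e3, if_true, if_false]
  split_ifs <;>
    first
      | rfl | omega | ring1
      | (split_ifs <;> first | rfl | omega | ring1)
      | (split_ifs <;> first | rfl | omega | ring1 |
          (split_ifs <;> first | rfl | omega | ring1))


lemma BB_eq_CC (j : Fin n) (hj : j.val ≠ ℓ.val) : BB ℓ R j = CC ℓ R j := by
  rw [BB, CC]
  by_cases h : j.val < ℓ.val
  · rw [if_pos h, if_pos (le_of_lt h)]
  · rw [if_neg h, if_neg hj, if_neg (by omega)]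

lemma isCore_CC (j : Fin n) : IsCore j (CC ℓ R j) := by
  rw [CC]
  split_ifs with h
  · exact isCore_coreM j _ (ggC_unitary ℓ R j h)
  · exact isCore_coreM j _ swapC_unitary

lemma isCore_BB (j : Fin n) : IsCore j (BB ℓ R j) := by
  rw [BB]
  split_ifs with h1 h2
  · exact isCore_coreM j _ (ggC_unitary ℓ R j (le_of_lt h1))
  · exact isCore_coreM j _
      (mul_star_unitary _ _ (ggC_unitary ℓ R j (le_of_eq h2)) swapC_unitary)
  · exact isCore_coreM j _ swapC_unitary

end SpikeAux

open SpikeAux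

/-- An upper triangular identity-plus-spike matrix `R` with spike in column `ℓ`,
embedded into `ℂ^{(n+1)×(n+1)}` with an extra `1` at position `(ℓ, n+1)` and a zero
last row, can be factored as `C^*(B + e₁ yᵀ)` where `C = C₁ ⋯ C_n` and `B = B₁ ⋯ B_n`
are descending products of core transformations. -/
theorem embedded_spike_factorization (n : ℕ) (hn : 1 ≤ n) (ℓ : Fin n)
    (R : Matrix (Fin n) (Fin n) ℂ)
    (hRid : ∀ i j : Fin n, j ≠ ℓ → R i j = if i = j then 1 else 0)
    (hRspike : ∀ i : Fin n, ℓ < i → R i ℓ = 0) :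
    ∃ (C B : Fin n → Matrix (Fin (n + 1)) (Fin (n + 1)) ℂ) (y : Fin (n + 1) → ℂ),
      (∀ j, IsCore j (C j)) ∧ (∀ j, IsCore j (B j)) ∧
      (Matrix.of (fun p q : Fin (n + 1) =>
          if hp : (p : ℕ) < n then
            if hq : (q : ℕ) < n then R ⟨p, hp⟩ ⟨q, hq⟩
            else if (p : ℕ) = (ℓ : ℕ) then 1 else 0
          else 0)) =
        (seqProd C)ᴴ * (seqProd B + vecMulVec (Pi.single (0 : Fin (n + 1)) (1 : ℂ)) y) := by
  
  classical
  have hLn : ℓ.val < n := ℓ.isLt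
  refine ⟨CC ℓ R, BB ℓ R,
    (fun q : Fin (n+1) => if (q : ℕ) = ℓ.val then -((tt ℓ R 0 : ℝ) : ℂ) else 0),
    isCore_CC ℓ R, isCore_BB ℓ R, ?_⟩
  have hget : (List.finRange n)[ℓ.val]? = some ℓ := by
    rw [List.getElem?_eq_getElem (by simpa using hLn)]
    congr 1
    apply Fin.ext
    simp
  have htake1 : (List.finRange n).take (ℓ.val+1) = (List.finRange n).take ℓ.val ++ [ℓ] := by
    rw [List.take_succ, hget]
    rfl
  have hfrsplit : (List.finRange n).map (CC ℓ R) =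
      ((List.finRange n).take (ℓ.val+1)).map (CC ℓ R) ++
      ((List.finRange n).drop (ℓ.val+1)).map (CC ℓ R) := by
    rw [← List.map_append, List.take_append_drop]
  have hfrsplitB : (List.finRange n).map (BB ℓ R) =
      ((List.finRange n).take (ℓ.val+1)).map (BB ℓ R) ++
      ((List.finRange n).drop (ℓ.val+1)).map (BB ℓ R) := by
    rw [← List.map_append, List.take_append_drop]
  have hmapT : ((List.finRange n).take ℓ.val).map (BB ℓ R) =
      ((List.finRange n).take ℓ.val).map (CC ℓ R) := by
    apply List.ext_getElem (by simp)
    intro i h1 h2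
    have hi : i < ℓ.val := by
      simp only [List.length_map, List.length_take, List.length_finRange] at h1
      omega
    simp only [List.getElem_map]
    apply BB_eq_CC
    have hx : (((List.finRange n).take ℓ.val)[i]'(by
        simp only [List.length_map] at h1; exact h1)).val = i := by
      simp [List.getElem_take]
    omega
  have hmapD : ((List.finRange n).drop (ℓ.val+1)).map (BB ℓ R) =
      ((List.finRange n).drop (ℓ.val+1)).map (CC ℓ R) := by
    apply List.ext_getElem (by simp)
    intro i h1 h2
    simp only [List.getElem_map]
    apply BB_eq_CC
    have hx : (((List.finRange n).drop (ℓ.val+1))[i]'(by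
        simp only [List.length_map] at h1; exact h1)).val = ℓ.val + 1 + i := by
      simp [List.getElem_drop]
    omega
  have hBl : BB ℓ R ℓ = CC ℓ R ℓ * coreM ℓ swapC := by
    rw [BB, if_neg (lt_irrefl _), if_pos rfl, CC, if_pos le_rfl, coreM_mul_coreM]
  have hsplitC : seqProd (CC ℓ R) =
      ((((List.finRange n).take ℓ.val).map (CC ℓ R)).prod * CC ℓ R ℓ) *
        (((List.finRange n).drop (ℓ.val+1)).map (CC ℓ R)).prod := by
    rw [seqProd, hfrsplit, List.prod_append, htake1, List.map_append, List.prod_append,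
      List.map_singleton, List.prod_singleton]
  have hsplitB : seqProd (BB ℓ R) =
      ((((List.finRange n).take ℓ.val).map (CC ℓ R)).prod *
        (CC ℓ R ℓ * coreM ℓ swapC)) *
        (((List.finRange n).drop (ℓ.val+1)).map (CC ℓ R)).prod := by
    rw [seqProd, hfrsplitB, List.prod_append, htake1, List.map_append, List.prod_append,
      List.map_singleton, List.prod_singleton, hmapT, hmapD, hBl]
  have htp : (((List.finRange n).take ℓ.val).map (CC ℓ R)).prod * CC ℓ R ℓ =
      (((List.finRange n).take (ℓ.val+1)).map (CC ℓ R)).prod := by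
    rw [htake1, List.map_append, List.prod_append, List.map_singleton, List.prod_singleton]
  have key : seqProd (CC ℓ R) *
      (Matrix.of (fun p q : Fin (n + 1) =>
          if hp : (p : ℕ) < n then
            if hq : (q : ℕ) < n then R ⟨p, hp⟩ ⟨q, hq⟩
            else if (p : ℕ) = (ℓ : ℕ) then 1 else 0
          else 0)) =
      seqProd (BB ℓ R) + vecMulVec (Pi.single (0 : Fin (n + 1)) (1 : ℂ))
        (fun q : Fin (n+1) => if (q : ℕ) = ℓ.val then -((tt ℓ R 0 : ℝ) : ℂ) else 0) := by
    rw [hsplitC, hsplitB, mul_assoc, key1 ℓ R hRid hRspike, mul_add]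
    congr 1
    · rw [← mul_assoc, mul_assoc (((List.finRange n).take ℓ.val).map (CC ℓ R)).prod]
    · rw [mul_vecMulVec, htp, takeProd ℓ R (ℓ.val+1) le_rfl]
      ext p q
      rw [Matrix.vecMulVec_apply, Matrix.vecMulVec_apply, dv, Pi.single_apply]
      by_cases hp : (p : ℕ) = 0
      · rw [if_pos hp, if_pos (Fin.ext hp : p = 0)]
        by_cases hq : (q : ℕ) = ℓ.val <;> simp [hq]
      · rw [if_neg hp, if_neg (fun h : p = 0 => hp (congrArg Fin.val h)),
          if_neg (by omega : ¬ (p : ℕ) < 0)]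
        simp
  have hu : seqProd (CC ℓ R) ∈ Matrix.unitaryGroup (Fin (n+1)) ℂ := by
    apply Submonoid.list_prod_mem
    intro x hx
    rw [List.mem_map] at hx
    obtain ⟨j, -, rfl⟩ := hx
    exact (isCore_CC ℓ R j).1
  rw [← key, ← Matrix.star_eq_conjTranspose, ← mul_assoc,
    Unitary.star_mul_self_of_mem hu, one_mul]
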